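/- Let B = { (A_b) ∈ C(0) : every component A_b is upper triangular } and L = { (A_b) ∈ C(0) : every component A_b is strictly lower triangular }. Then B is a Lie subalgebra of C(0), the projection onto the component b = 0 restricts to a Lie algebra isomorphism from B onto the Borel subalgebra of upper triangular matrices in gl_n(ℂ), and C(0) = B ⊕ L as complex vector spaces. (Thus C(0) is isomorphic to the semidirect sum b ⋉ (n_-)^a, i.e. to the Iwahori algebra quotient I/zI.) -/

import Mathlib

/-- The diagonal matrix `D_b(0)` over `ℂ` whose `(b+1,b+1)` entry (1-based), i.e. `(b,b)`
entry (0-based), is `0` and whose other diagonal entries are `1`. -/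
def Dmat0 (n : ℕ) (b : Fin n) : Matrix (Fin n) (Fin n) ℂ :=
  Matrix.diagonal (fun i => if i = b then 0 else 1)

/-- `C(0)`: tuples `(A_b)_{b ∈ ℤ/nℤ}` of complex `n×n` matrices with
`A_{b+1} D_b(0) = D_b(0) A_b` for all `b`. -/
def Cset0 (n : ℕ) [NeZero n] : Set (Fin n → Matrix (Fin n) (Fin n) ℂ) :=
  {A | ∀ b : Fin n, A (b + 1) * Dmat0 n b = Dmat0 n b * A b}

/-- `B`: tuples in `C(0)` all of whose components are upper triangular
(entries `(i,j)` with `i > j` vanish). -/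
def Bset (n : ℕ) [NeZero n] : Set (Fin n → Matrix (Fin n) (Fin n) ℂ) :=
  {A | A ∈ Cset0 n ∧ ∀ (b : Fin n) (i j : Fin n), j < i → A b i j = 0}

/-- `L`: tuples in `C(0)` all of whose components are strictly lower triangular
(entries `(i,j)` with `i ≤ j` vanish). -/
def Lset (n : ℕ) [NeZero n] : Set (Fin n → Matrix (Fin n) (Fin n) ℂ) :=
  {A | A ∈ Cset0 n ∧ ∀ (b : Fin n) (i j : Fin n), i ≤ j → A b i j = 0}

/-- The Borel subalgebra of upper triangular matrices in `gl_n(ℂ)`. -/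
def BorelSet (n : ℕ) : Set (Matrix (Fin n) (Fin n) ℂ) :=
  {X | ∀ i j : Fin n, j < i → X i j = 0}

section Aux

set_option linter.unusedSectionVars false

variable {n : ℕ} [NeZero n]

lemma entry_rel {A : Fin n → Matrix (Fin n) (Fin n) ℂ} (hA : A ∈ Cset0 n)
    (b i j : Fin n) :
    A (b+1) i j * (if j = b then 0 else 1) = (if i = b then 0 else 1) * A b i j := by
  have h := congrFun (congrFun (hA b) i) j
  simpa [Dmat0, Matrix.mul_diagonal, Matrix.diagonal_mul] using h

lemma lemE {A : Fin n → Matrix (Fin n) (Fin n) ℂ} (hA : A ∈ Cset0 n)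
    {b i j : Fin n} (hbi : b ≠ i) (hbj : b ≠ j) : A (b+1) i j = A b i j := by
  have h := entry_rel hA b i j
  simpa [hbi.symm, hbj.symm] using h

lemma lemZ2 {A : Fin n → Matrix (Fin n) (Fin n) ℂ} (hA : A ∈ Cset0 n)
    {i j : Fin n} (hij : i ≠ j) : A (i+1) i j = 0 := by
  have h := entry_rel hA i i j
  simpa [hij.symm] using h

lemma val_add_one' (hn : 2 ≤ n) (b : Fin n) :
    ((b+1 : Fin n)).val = if b.val + 1 = n then 0 else b.val + 1 := by
  have h1 : ((1:Fin n)).val = 1 := by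
    rw [Fin.val_one']; exact Nat.mod_eq_of_lt hn
  rw [Fin.val_add, h1]
  split
  · next h => rw [h, Nat.mod_self]
  · next h => exact Nat.mod_eq_of_lt (lt_of_le_of_ne b.isLt h)

open Fin.NatCast in
lemma propag {A : Fin n → Matrix (Fin n) (Fin n) ℂ} (hA : A ∈ Cset0 n) (i j : Fin n) :
    ∀ k l : ℕ, k ≤ l →
      (∀ m : ℕ, k ≤ m → m < l → (m : Fin n) ≠ i ∧ (m : Fin n) ≠ j) →
      A ((k : ℕ) : Fin n) i j = A ((l : ℕ) : Fin n) i j := by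
  intro k l hkl hcond
  induction l with
  | zero =>
      have : k = 0 := by omega
      rw [this]
  | succ l ih =>
      rcases Nat.lt_or_ge k (l+1) with h | h
      · have hk : k ≤ l := by omega
        rw [ih hk (fun m hm hm' => hcond m hm (by omega))]
        have hcast : ((l+1 : ℕ) : Fin n) = ((l:ℕ) : Fin n) + 1 := by push_cast; ring
        rw [hcast, lemE hA (hcond l hk (by omega)).1 (hcond l hk (by omega)).2]
      · have : k = l + 1 := by omega
        rw [this]

open Fin.NatCast in
lemma zero_of {A : Fin n → Matrix (Fin n) (Fin n) ℂ} (hA : A ∈ Cset0 n)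
    (hu : ∀ (b i j : Fin n), j < i → A b i j = 0) (h0 : A 0 = 0) :
    ∀ b, A b = 0 := by
  intro b
  ext i j
  show A b i j = 0
  rcases lt_or_ge j i with hji | hij
  · exact hu b i j hji
  · have hij' : i.val ≤ j.val := hij
    have hbv : ((b.val : ℕ) : Fin n) = b := Fin.cast_val_eq_self b
    have hA0 : A ((0:ℕ) : Fin n) i j = 0 := by
      have : ((0:ℕ):Fin n) = 0 := by norm_num
      rw [this, h0]; rfl
    have hvcast : ∀ m : ℕ, m < n → ((m : Fin n)).val = m := fun m hm => Fin.val_cast_of_lt hm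
    rcases le_or_gt b.val i.val with hbi | hbi
    · have := propag hA i j 0 b.val (by omega)
        (fun m hm hm' => by
          constructor
          · intro he; have := hvcast m (by omega); rw [he] at this; omega
          · intro he; have := hvcast m (by omega); rw [he] at this; omega)
      rw [hbv] at this
      rw [← this]
      simpa using hA0
    · rcases le_or_gt b.val j.val with hbj | hbj
      · have hij2 : i ≠ j := by intro he; rw [he] at hbi; omega
        have hstart : A ((i.val + 1 : ℕ) : Fin n) i j = 0 := by
          have hc : ((i.val + 1 : ℕ) : Fin n) = i + 1 := by
            push_cast [Fin.cast_val_eq_self]; ring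
          rw [hc]; exact lemZ2 hA hij2
        have := propag hA i j (i.val+1) b.val (by omega)
          (fun m hm hm' => by
            constructor
            · intro he; have := hvcast m (by omega); rw [he] at this; omega
            · intro he; have := hvcast m (by omega); rw [he] at this; omega)
        rw [hbv] at this
        rw [← this, hstart]
      · have := propag hA i j b.val n (by omega)
          (fun m hm hm' => by
            constructor
            · intro he; have := hvcast m (by omega); rw [he] at this; omega
            · intro he; have := hvcast m (by omega); rw [he] at this; omega)
        rw [hbv] at this
        rw [this]
        have hn0 : ((n : ℕ) : Fin n) = 0 := by
          ext; simp [Fin.val_cast_of_lt, Nat.mod_self]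
        rw [hn0] at this ⊢
        simpa using hA0

def liftB (X : Matrix (Fin n) (Fin n) ℂ) : Fin n → Matrix (Fin n) (Fin n) ℂ :=
  fun b => Matrix.of fun i j => if i ≤ j ∧ (b ≤ i ∨ j < b) then X i j else 0

lemma liftB_upper (X : Matrix (Fin n) (Fin n) ℂ) (b i j : Fin n) (h : j < i) :
    liftB X b i j = 0 := by
  have : ¬ (i ≤ j) := not_le_of_gt h
  simp [liftB, this]

lemma liftB_zero (X : Matrix (Fin n) (Fin n) ℂ) (hX : X ∈ BorelSet n) :
    liftB X 0 = X := by
  ext i j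
  show (if i ≤ j ∧ ((0:Fin n) ≤ i ∨ j < 0) then X i j else 0) = X i j
  rcases le_or_gt i j with h | h
  · rw [if_pos ⟨h, Or.inl (Fin.zero_le i)⟩]
  · rw [if_neg (fun hc => absurd hc.1 (not_le_of_gt h)), hX i j h]

lemma liftB_mem_Cset0 (hn : 2 ≤ n) (X : Matrix (Fin n) (Fin n) ℂ) :
    liftB X ∈ Cset0 n := by
  intro b
  ext i j
  rw [Dmat0, Matrix.mul_diagonal, Matrix.diagonal_mul]
  have hb1' : (b.val + 1 = n ∧ ((b+1 : Fin n)).val = 0) ∨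
      (b.val + 1 < n ∧ ((b+1 : Fin n)).val = b.val + 1) := by
    have hb1 := val_add_one' hn b
    rcases eq_or_ne (b.val + 1) n with he | he
    · left; rw [hb1, if_pos he]; exact ⟨he, rfl⟩
    · right; rw [hb1, if_neg he]
      exact ⟨lt_of_le_of_ne b.isLt he, rfl⟩
  have hiv := i.isLt; have hjv := j.isLt; have hbv := b.isLt
  rcases eq_or_ne j b with rfl | hjb
  · rw [if_pos rfl, mul_zero]
    rcases eq_or_ne i j with rfl | hij
    · rw [if_pos rfl, zero_mul]
    · rw [if_neg hij, one_mul]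
      symm
      show (if i ≤ j ∧ (j ≤ i ∨ j < j) then X i j else 0) = 0
      rw [if_neg]
      rintro ⟨h1, h2 | h2⟩
      · exact hij (le_antisymm h1 h2)
      · exact absurd h2 (lt_irrefl j)
  · rw [if_neg hjb, mul_one]
    rcases eq_or_ne i b with rfl | hib
    · rw [if_pos rfl, zero_mul]
      show (if i ≤ j ∧ (i+1 ≤ i ∨ j < i+1) then X i j else 0) = 0
      rw [if_neg]
      have hjb' : j.val ≠ i.val := fun h => hjb (Fin.ext h)
      rintro ⟨h1, h2 | h2⟩
      · have h1' : i.val ≤ j.val := h1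
        have h2' : (i+1 : Fin n).val ≤ i.val := h2
        omega
      · have h1' : i.val ≤ j.val := h1
        have h2' : j.val < (i+1 : Fin n).val := h2
        omega
    · rw [if_neg hib, one_mul]
      show (if i ≤ j ∧ (b+1 ≤ i ∨ j < b+1) then X i j else 0)
         = (if i ≤ j ∧ (b ≤ i ∨ j < b) then X i j else 0)
      apply if_congr _ rfl rfl
      have hib' : i.val ≠ b.val := fun h => hib (Fin.ext h)
      have hjb' : j.val ≠ b.val := fun h => hjb (Fin.ext h)
      constructor
      · rintro ⟨h1, h2⟩
        refine ⟨h1, ?_⟩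
        have h1' : i.val ≤ j.val := h1
        rcases hb1' with ⟨he, h0⟩ | ⟨he, h0⟩
        · right; show j.val < b.val; omega
        · rcases h2 with h2 | h2
          · have h2' : (b+1 : Fin n).val ≤ i.val := h2
            left; show b.val ≤ i.val; omega
          · have h2' : j.val < (b+1 : Fin n).val := h2
            right; show j.val < b.val; omega
      · rintro ⟨h1, h2⟩
        refine ⟨h1, ?_⟩
        have h1' : i.val ≤ j.val := h1
        rcases hb1' with ⟨he, h0⟩ | ⟨he, h0⟩
        · left; show (b+1 : Fin n).val ≤ i.val; omega
        · rcases h2 with h2 | h2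
          · have h2' : b.val ≤ i.val := h2
            left; show (b+1 : Fin n).val ≤ i.val; omega
          · have h2' : j.val < b.val := h2
            right; show j.val < (b+1 : Fin n).val; omega

lemma Cset0_zero : (0 : Fin n → Matrix (Fin n) (Fin n) ℂ) ∈ Cset0 n := by
  intro b; simp

lemma Cset0_add {A B : Fin n → Matrix (Fin n) (Fin n) ℂ}
    (hA : A ∈ Cset0 n) (hB : B ∈ Cset0 n) : A + B ∈ Cset0 n := by
  intro b
  simp only [Pi.add_apply, add_mul, Matrix.add_mul, Matrix.mul_add, hA b, hB b]

lemma Cset0_smul {A : Fin n → Matrix (Fin n) (Fin n) ℂ} (c : ℂ)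
    (hA : A ∈ Cset0 n) : c • A ∈ Cset0 n := by
  intro b
  simp only [Pi.smul_apply, Matrix.smul_mul, Matrix.mul_smul, hA b]

lemma Cset0_sub {A B : Fin n → Matrix (Fin n) (Fin n) ℂ}
    (hA : A ∈ Cset0 n) (hB : B ∈ Cset0 n) : A - B ∈ Cset0 n := by
  intro b
  simp only [Pi.sub_apply, Matrix.sub_mul, Matrix.mul_sub, hA b, hB b]

lemma Cset0_mul {A B : Fin n → Matrix (Fin n) (Fin n) ℂ}
    (hA : A ∈ Cset0 n) (hB : B ∈ Cset0 n) :
    (fun b => A b * B b) ∈ Cset0 n := by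
  intro b
  show A (b+1) * B (b+1) * Dmat0 n b = Dmat0 n b * (A b * B b)
  rw [mul_assoc, hB b, ← mul_assoc, hA b, mul_assoc]

lemma mul_upper {M N : Matrix (Fin n) (Fin n) ℂ}
    (hM : ∀ i j : Fin n, j < i → M i j = 0) (hN : ∀ i j : Fin n, j < i → N i j = 0) :
    ∀ i j : Fin n, j < i → (M * N) i j = 0 := by
  intro i j h
  rw [Matrix.mul_apply]
  apply Finset.sum_eq_zero
  intro k _
  rcases lt_or_ge k i with hk | hk
  · rw [hM i k hk, zero_mul]
  · rw [hN k j (lt_of_lt_of_le h hk), mul_zero]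

end Aux

/-- `B` is a Lie subalgebra of `C(0)` (a ℂ-subspace closed under the
componentwise commutator bracket), the projection onto the component `b = 0` (which
automatically preserves the bracket) restricts to a bijection from `B` onto the Borel
subalgebra of upper triangular matrices in `gl_n(ℂ)`, and `C(0) = B ⊕ L` as complex
vector spaces: every element of `C(0)` is uniquely the sum of an element of `B` and an
element of `L`. -/
theorem statement11 (n : ℕ) [NeZero n] (hn : 2 ≤ n) :
    (∃ S : Submodule ℂ (Fin n → Matrix (Fin n) (Fin n) ℂ),
      (S : Set (Fin n → Matrix (Fin n) (Fin n) ℂ)) = Bset n ∧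
      ∀ A ∈ S, ∀ B ∈ S, (fun b => A b * B b - B b * A b) ∈ S) ∧
    Set.BijOn (fun A : Fin n → Matrix (Fin n) (Fin n) ℂ => A 0) (Bset n) (BorelSet n) ∧
    (∀ A ∈ Cset0 n,
      ∃! p : (Fin n → Matrix (Fin n) (Fin n) ℂ) × (Fin n → Matrix (Fin n) (Fin n) ℂ),
        p.1 ∈ Bset n ∧ p.2 ∈ Lset n ∧ A = p.1 + p.2) := by
  refine ⟨?_, ?_, ?_⟩
  · -- B is a Lie subalgebra
    refine ⟨{ carrier := Bset n
              add_mem' := ?_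
              zero_mem' := ?_
              smul_mem' := ?_ }, rfl, ?_⟩
    · rintro A B ⟨hA, hA'⟩ ⟨hB, hB'⟩
      exact ⟨Cset0_add hA hB, fun b i j h => by
        simp [Pi.add_apply, hA' b i j h, hB' b i j h]⟩
    · exact ⟨Cset0_zero, fun b i j h => rfl⟩
    · rintro c A ⟨hA, hA'⟩
      exact ⟨Cset0_smul c hA, fun b i j h => by
        simp [Pi.smul_apply, hA' b i j h]⟩
    · rintro A ⟨hA, hA'⟩ B ⟨hB, hB'⟩
      refine ⟨?_, fun b i j h => ?_⟩
      · have h1 : ((fun b => A b * B b) - fun b => B b * A b) ∈ Cset0 n :=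
          Cset0_sub (Cset0_mul hA hB) (Cset0_mul hB hA)
        exact h1
      · show (A b * B b) i j - (B b * A b) i j = 0
        rw [mul_upper (hA' b) (hB' b) i j h, mul_upper (hB' b) (hA' b) i j h, sub_zero]
  · -- BijOn
    refine ⟨fun A hA => hA.2 0, ?_, ?_⟩
    · -- InjOn
      rintro A ⟨hA, hA'⟩ A' ⟨hA2, hA2'⟩ h0
      have hD : A - A' ∈ Cset0 n := Cset0_sub hA hA2
      have hDu : ∀ (b i j : Fin n), j < i → (A - A') b i j = 0 := fun b i j h => by
        show A b i j - A' b i j = 0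
        rw [hA' b i j h, hA2' b i j h, sub_zero]
      have hD0 : (A - A') 0 = 0 := by
        show A 0 - A' 0 = 0
        rw [show A 0 = A' 0 from h0, sub_self]
      have := zero_of hD hDu hD0
      funext b
      have hb := this b
      have : A b - A' b = 0 := hb
      exact sub_eq_zero.mp this
    · -- SurjOn
      intro X hX
      exact ⟨liftB X, ⟨liftB_mem_Cset0 hn X, fun b i j h => liftB_upper X b i j h⟩,
        liftB_zero X hX⟩
  · -- decomposition
    intro A hA
    refine ⟨⟨fun b => Matrix.of fun i j => if i ≤ j then A b i j else 0,
             fun b => Matrix.of fun i j => if i ≤ j then 0 else A b i j⟩, ⟨?_, ?_, ?_⟩, ?_⟩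
    · -- upper part in Bset
      constructor
      · intro b
        ext i j
        rw [Dmat0, Matrix.mul_diagonal, Matrix.diagonal_mul]
        have h := entry_rel hA b i j
        show (if i ≤ j then A (b+1) i j else 0) * (if j = b then (0:ℂ) else 1)
           = (if i = b then (0:ℂ) else 1) * (if i ≤ j then A b i j else 0)
        rcases le_or_gt i j with hij | hij
        · rw [if_pos hij, if_pos hij]; exact h
        · rw [if_neg (not_le_of_gt hij), if_neg (not_le_of_gt hij), zero_mul, mul_zero]
      · intro b i j h
        show (if i ≤ j then A b i j else 0) = 0
        rw [if_neg (not_le_of_gt h)]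
    · -- lower part in Lset
      constructor
      · intro b
        ext i j
        rw [Dmat0, Matrix.mul_diagonal, Matrix.diagonal_mul]
        have h := entry_rel hA b i j
        show (if i ≤ j then (0:ℂ) else A (b+1) i j) * (if j = b then (0:ℂ) else 1)
           = (if i = b then (0:ℂ) else 1) * (if i ≤ j then (0:ℂ) else A b i j)
        rcases le_or_gt i j with hij | hij
        · rw [if_pos hij, if_pos hij, zero_mul, mul_zero]
        · rw [if_neg (not_le_of_gt hij), if_neg (not_le_of_gt hij)]; exact h
      · intro b i j h
        show (if i ≤ j then (0:ℂ) else A b i j) = 0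
        rw [if_pos h]
    · -- A is the sum
      funext b
      ext i j
      show A b i j = (if i ≤ j then A b i j else 0) + (if i ≤ j then 0 else A b i j)
      rcases le_or_gt i j with hij | hij
      · rw [if_pos hij, if_pos hij, add_zero]
      · rw [if_neg (not_le_of_gt hij), if_neg (not_le_of_gt hij), zero_add]
    · -- uniqueness
      rintro ⟨P, Q⟩ ⟨⟨hP, hP'⟩, ⟨hQ, hQ'⟩, hsum⟩
      dsimp only at hP hP' hQ hQ' hsum
      have hPval : ∀ (b : Fin n) (i j : Fin n),
          P b i j = if i ≤ j then A b i j else 0 := by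
        intro b i j
        have h := congrFun (congrFun (congrFun hsum b) i) j
        rcases le_or_gt i j with hij | hij
        · rw [if_pos hij]
          have hq := hQ' b i j hij
          show P b i j = A b i j
          rw [show A b i j = P b i j + Q b i j from h, hq, add_zero]
        · rw [if_neg (not_le_of_gt hij)]
          exact hP' b i j hij
      have hQval : ∀ (b : Fin n) (i j : Fin n),
          Q b i j = if i ≤ j then 0 else A b i j := by
        intro b i j
        have h := congrFun (congrFun (congrFun hsum b) i) j
        rcases le_or_gt i j with hij | hij
        · rw [if_pos hij]
          exact hQ' b i j hij
        · rw [if_neg (not_le_of_gt hij)]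
          have hp := hP' b i j hij
          show Q b i j = A b i j
          rw [show A b i j = P b i j + Q b i j from h, hp, zero_add]
      refine Prod.ext ?_ ?_
      · funext b; ext i j; exact hPval b i j
      · funext b; ext i j; exact hQval b i j
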